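/- Let F be a k-CNF formula with finitely many clauses, where k ≥ 1 and every clause is a disjunction of literals over exactly k distinct Boolean variables. If every clause of F shares a variable with at most 2^k/e − 1 other clauses of F (where e is Euler's number), then F has a satisfying assignment. -/

import Mathlib

open Finset


lemma indep_count {ι : Type*} [Fintype ι] [DecidableEq ι]
    (T S : Finset (ι → Bool)) (W U : Finset ι) (hWU : Disjoint W U)
    (hT : ∀ σ τ : ι → Bool, (∀ v ∈ W, σ v = τ v) → σ ∈ T → τ ∈ T)
    (hS : ∀ σ τ : ι → Bool, (∀ v ∈ U, σ v = τ v) → σ ∈ S → τ ∈ S) :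
    (T ∩ S).card * 2 ^ Fintype.card ι = T.card * S.card := by
  classical
  have hUW : ∀ v ∈ U, v ∉ W := fun v hv hw => (Finset.disjoint_left.mp hWU) hw hv
  have hcard : (T ×ˢ S).card = ((T ∩ S) ×ˢ (univ : Finset (ι → Bool))).card := by
    refine Finset.card_bij' (fun p _ => ((fun v => if v ∈ W then p.1 v else p.2 v),
          (fun v => if v ∈ W then p.2 v else p.1 v)))
        (fun p _ => ((fun v => if v ∈ W then p.1 v else p.2 v),
          (fun v => if v ∈ W then p.2 v else p.1 v))) ?_ ?_ ?_ ?_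
    · rintro ⟨σ, τ⟩ hp
      rw [Finset.mem_product] at hp
      rw [Finset.mem_product, Finset.mem_inter]
      refine ⟨⟨hT σ _ (fun v hv => by simp [hv]) hp.1,
        hS τ _ (fun v hv => by simp [hUW v hv]) hp.2⟩, Finset.mem_univ _⟩
    · rintro ⟨σ, τ⟩ hp
      rw [Finset.mem_product, Finset.mem_inter] at hp
      rw [Finset.mem_product]
      exact ⟨hT σ _ (fun v hv => by simp [hv]) hp.1.1,
        hS σ _ (fun v hv => by simp [hUW v hv]) hp.1.2⟩
    · rintro ⟨σ, τ⟩ hp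
      refine Prod.ext ?_ ?_ <;> funext v <;> by_cases hv : v ∈ W <;> simp [hv]
    · rintro ⟨σ, τ⟩ hp
      refine Prod.ext ?_ ?_ <;> funext v <;> by_cases hv : v ∈ W <;> simp [hv]
  rw [Finset.card_product, Finset.card_product, card_univ, Fintype.card_fun,
    Fintype.card_bool] at hcard
  omega

lemma count_forced {ι : Type*} [Fintype ι] [DecidableEq ι] (W : Finset ι) (f : ι → Bool) :
    (univ.filter (fun σ : ι → Bool => ∀ v ∈ W, σ v = f v)).card
      = 2 ^ (Fintype.card ι - W.card) := by
  classical
  have h : (univ.filter (fun σ : ι → Bool => ∀ v ∈ W, σ v = f v)).card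
      = (univ : Finset ({v : ι // v ∉ W} → Bool)).card := by
    refine Finset.card_bij' (fun σ _ => fun v => σ v.1)
      (fun g _ => fun v => if h : v ∈ W then f v else g ⟨v, h⟩) ?_ ?_ ?_ ?_
    · intro σ hσ; exact mem_univ _
    · intro g hg
      simp only [mem_filter, mem_univ, true_and]
      intro v hv; simp [hv]
    · intro σ hσ
      simp only [mem_filter, mem_univ, true_and] at hσ
      funext v
      by_cases hv : v ∈ W
      · simp [hv, hσ v hv]
      · simp [hv]
    · intro g hg
      funext v
      simp [v.2]
  rw [h, card_univ, Fintype.card_fun, Fintype.card_bool, Fintype.card_subtype_compl]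
  congr 2
  simp [Fintype.card_subtype]

lemma pow_ge_exp_neg_one {x : ℝ} (hx0 : 0 < x) (hx1 : x < 1) (n : ℕ)
    (hn : (n : ℝ) * x ≤ 1 - x) : Real.exp (-1) ≤ (1 - x) ^ n := by
  have h1x : (0:ℝ) < 1 - x := by linarith
  have hlog : -Real.log (1 - x) ≤ x / (1 - x) := by
    have := Real.log_le_sub_one_of_pos (x := (1 - x)⁻¹) (by positivity)
    rw [Real.log_inv] at this
    have : -Real.log (1 - x) ≤ (1 - x)⁻¹ - 1 := this
    calc -Real.log (1-x) ≤ (1-x)⁻¹ - 1 := this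
      _ = x / (1-x) := by field_simp; ring
  have key : -1 ≤ (n : ℝ) * Real.log (1 - x) := by
    have h2 : (n:ℝ) * (-Real.log (1-x)) ≤ (n:ℝ) * (x / (1-x)) :=
      mul_le_mul_of_nonneg_left hlog (Nat.cast_nonneg n)
    have h3 : (n:ℝ) * (x / (1-x)) ≤ 1 := by
      rw [mul_div_assoc' , div_le_one h1x]; linarith [hn]
    nlinarith
  calc Real.exp (-1) ≤ Real.exp ((n:ℝ) * Real.log (1-x)) := Real.exp_le_exp.mpr key
    _ = (Real.exp (Real.log (1-x)))^n := Real.exp_nat_mul _ n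
    _ = (1-x)^n := by rw [Real.exp_log h1x]

lemma abstract_LLL {ι α : Type*} [Fintype ι] [DecidableEq ι] [DecidableEq α]
    (F : Finset α) (Bad : α → Finset (ι → Bool)) (vars : α → Finset ι)
    (x : ℝ) (hx0 : 0 < x) (hx1 : x < 1)
    (hdep : ∀ C ∈ F, ∀ σ τ : ι → Bool, (∀ v ∈ vars C, σ v = τ v) → σ ∈ Bad C → τ ∈ Bad C)
    (hkey : ∀ C ∈ F, ((Bad C).card : ℝ) ≤
        x * (1 - x) ^ ((F.filter (fun C' => C' ≠ C ∧
          ¬ Disjoint (vars C) (vars C'))).card) * 2 ^ Fintype.card ι) :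
    ∃ σ : ι → Bool, ∀ C ∈ F, σ ∉ Bad C := by
  classical
  set Good : Finset α → Finset (ι → Bool) :=
    fun S => univ.filter (fun σ => ∀ C ∈ S, σ ∉ Bad C) with hGood
  have hGoodmem : ∀ S (σ : ι → Bool), σ ∈ Good S ↔ ∀ C ∈ S, σ ∉ Bad C := by
    intro S σ; simp [hGood]
  have hGoodmono : ∀ {S S'}, S ⊆ S' → Good S' ⊆ Good S := by
    intro S S' hss σ hσ
    rw [hGoodmem] at hσ ⊢
    exact fun C hC => hσ C (hss hC)
  have hGoodinsert : ∀ (C : α) (S : Finset α), Good (insert C S) = Good S \ Bad C := by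
    intro C S
    ext σ
    simp only [hGoodmem, Finset.mem_sdiff, Finset.mem_insert]
    constructor
    · intro h; exact ⟨fun C' hC' => h C' (Or.inr hC'), h C (Or.inl rfl)⟩
    · rintro ⟨h1, h2⟩ C' hC'
      rcases hC' with rfl | hC'
      · exact h2
      · exact h1 C' hC'
  have hGoodcard : ∀ (C : α) (S : Finset α),
      ((Good (insert C S)).card : ℝ) = (Good S).card - ((Good S ∩ Bad C).card : ℝ) := by
    intro C S
    rw [hGoodinsert]
    have := Finset.card_inter_add_card_sdiff (Good S) (Bad C)
    push_cast [← this]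
    ring
  -- main induction
  have main : ∀ n : ℕ, ∀ S ⊆ F, S.card ≤ n → ∀ C ∈ F,
      ((Good S ∩ Bad C).card : ℝ) ≤ x * (Good S).card := by
    intro n
    induction n using Nat.strong_induction_on with
    | _ n IH =>
      intro S hSF hScard C hCF
      by_cases hCS : C ∈ S
      · have : Good S ∩ Bad C = ∅ := by
          ext σ
          simp only [Finset.mem_inter, Finset.notMem_empty, iff_false, not_and]
          intro hσ
          exact (hGoodmem S σ).mp hσ C hCS
        rw [this]
        simp only [Finset.card_empty, Nat.cast_zero]
        positivity
      · set N := S.filter (fun C' => ¬ Disjoint (vars C) (vars C')) with hN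
        set M := S.filter (fun C' => Disjoint (vars C) (vars C')) with hM
        have hNM : N ∪ M = S := by
          rw [hN, hM, Finset.union_comm]
          exact Finset.filter_union_filter_not_eq _ S
        have hMF : M ⊆ F := (Finset.filter_subset _ _).trans hSF
        have hNF : N ⊆ F := (Finset.filter_subset _ _).trans hSF
        -- Step A : independence
        have hdisj : Disjoint (vars C) (M.sup vars) := by
          rw [Finset.disjoint_sup_right]
          intro C' hC'
          exact (Finset.mem_filter.mp hC').2
        have stepA : ((Bad C ∩ Good M).card : ℕ) * 2 ^ Fintype.card ι
            = (Bad C).card * (Good M).card := by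
          refine indep_count _ _ (vars C) (M.sup vars) hdisj (hdep C hCF) ?_
          intro σ τ hagree hσ
          rw [hGoodmem] at hσ ⊢
          intro C' hC' hτ
          have hag' : ∀ v ∈ vars C', τ v = σ v := fun v hv =>
            (hagree v (Finset.mem_sup.mpr ⟨C', hC', hv⟩)).symm
          exact hσ C' hC' (hdep C' (hMF hC') τ σ hag' hτ)
        -- Step B : peeling
        have stepB : ∀ m : ℕ, ∀ N' ⊆ N, N'.card ≤ m →
            (1 - x) ^ N'.card * ((Good M).card : ℝ) ≤ (Good (N' ∪ M)).card := by
          intro m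
          induction m with
          | zero =>
            intro N' hN' hcard
            have hN0 : N' = ∅ := Finset.card_eq_zero.mp (Nat.le_zero.mp hcard)
            subst hN0
            simp
          | succ m IHm =>
            intro N' hN'N hcard
            rcases Finset.eq_empty_or_nonempty N' with rfl | ⟨C', hC'⟩
            · simp
            · have hC'N : C' ∈ N := hN'N hC'
              have hC'S : C' ∈ S := (Finset.mem_filter.mp hC'N).1
              have hC'F : C' ∈ F := hSF hC'S
              set N'' := N'.erase C' with hN''
              have hins : N' ∪ M = insert C' (N'' ∪ M) := by
                rw [← Finset.insert_union, hN'', Finset.insert_erase hC']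
              have hsubS : N'' ∪ M ⊆ S := by
                intro a ha
                rcases Finset.mem_union.mp ha with h | h
                · exact (Finset.mem_filter.mp (hN'N (Finset.erase_subset _ _ h))).1
                · exact (Finset.mem_filter.mp h).1
              have hC'notin : C' ∉ N'' ∪ M := by
                rw [Finset.mem_union]
                rintro (h | h)
                · exact (Finset.notMem_erase _ _) h
                · have := (Finset.mem_filter.mp h).2
                  exact (Finset.mem_filter.mp hC'N).2 this
              have hcardlt : (N'' ∪ M).card < n := by
                have h1 : N'' ∪ M ⊆ S.erase C' := by
                  intro a ha
                  exact Finset.mem_erase.mpr ⟨fun h => hC'notin (h ▸ ha), hsubS ha⟩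
                have h2 := Finset.card_le_card h1
                have h3 := Finset.card_erase_of_mem hC'S
                have h4 : 1 ≤ S.card := Finset.card_pos.mpr ⟨C', hC'S⟩
                omega
              have hIHouter := IH _ hcardlt (N'' ∪ M) (hsubS.trans hSF) le_rfl C' hC'F
              have hIHinner : (1 - x) ^ N''.card * ((Good M).card : ℝ)
                  ≤ (Good (N'' ∪ M)).card := by
                refine IHm N'' ((Finset.erase_subset _ _).trans hN'N) ?_
                have h5 := Finset.card_erase_of_mem hC'
                rw [← hN''] at h5
                have h4 : 1 ≤ N'.card := Finset.card_pos.mpr ⟨C', hC'⟩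
                omega
              have hcards : ((Good (N' ∪ M)).card : ℝ)
                  = (Good (N'' ∪ M)).card - ((Good (N'' ∪ M) ∩ Bad C').card : ℝ) := by
                rw [hins]; exact hGoodcard C' (N'' ∪ M)
              have hNcard : N'.card = N''.card + 1 := by
                rw [hN'', Finset.card_erase_of_mem hC']
                have h4 : 1 ≤ N'.card := Finset.card_pos.mpr ⟨C', hC'⟩
                omega
              rw [hNcard, hcards, pow_succ]
              have hgm : (0:ℝ) ≤ (Good M).card := Nat.cast_nonneg _
              have hpow : (0:ℝ) ≤ (1-x)^N''.card := pow_nonneg (by linarith) _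
              nlinarith [hIHouter, hIHinner]
        -- Step C : combine
        have hsub : Good S ∩ Bad C ⊆ Good M ∩ Bad C := by
          have : M ⊆ S := Finset.filter_subset _ _
          exact Finset.inter_subset_inter (hGoodmono this) (Finset.Subset.refl _)
        have hNsub : N ⊆ F.filter (fun C' => C' ≠ C ∧ ¬ Disjoint (vars C) (vars C')) := by
          intro C' hC'
          rw [Finset.mem_filter] at hC' ⊢
          exact ⟨hSF hC'.1, fun h => hCS (h ▸ hC'.1), hC'.2⟩
        set d := (F.filter (fun C' => C' ≠ C ∧ ¬ Disjoint (vars C) (vars C'))).card with hd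
        have hNd : N.card ≤ d := Finset.card_le_card hNsub
        have hpowle : (1 - x) ^ d ≤ (1 - x) ^ N.card :=
          pow_le_pow_of_le_one (by linarith) (by linarith) hNd
        have hP : (0:ℝ) < 2 ^ Fintype.card ι := by positivity
        rw [← hNM]
        -- work multiplied by 2^|ι|
        have chain : ((Good (N ∪ M) ∩ Bad C).card : ℝ) * 2 ^ Fintype.card ι
            ≤ x * (Good (N ∪ M)).card * 2 ^ Fintype.card ι := by
          have e1 : ((Good (N ∪ M) ∩ Bad C).card : ℝ) ≤ ((Good M ∩ Bad C).card : ℝ) := by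
            exact_mod_cast Finset.card_le_card (by rw [hNM] at *; exact hsub)
          have e2 : ((Good M ∩ Bad C).card : ℝ) * 2 ^ Fintype.card ι
              = ((Bad C).card : ℝ) * (Good M).card := by
            rw [Finset.inter_comm]
            exact_mod_cast stepA
          have e3 : ((Bad C).card : ℝ) * (Good M).card
              ≤ (x * (1-x)^d * 2 ^ Fintype.card ι) * (Good M).card :=
            mul_le_mul_of_nonneg_right (hkey C hCF) (Nat.cast_nonneg _)
          have e4 : (1-x)^d * ((Good M).card : ℝ) ≤ (1-x)^(N.card) * (Good M).card :=
            mul_le_mul_of_nonneg_right hpowle (Nat.cast_nonneg _)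
          have e5 := stepB N.card N (Finset.Subset.refl _) le_rfl
          calc ((Good (N ∪ M) ∩ Bad C).card : ℝ) * 2 ^ Fintype.card ι
              ≤ ((Good M ∩ Bad C).card : ℝ) * 2 ^ Fintype.card ι :=
                mul_le_mul_of_nonneg_right e1 (le_of_lt hP)
            _ = ((Bad C).card : ℝ) * (Good M).card := e2
            _ ≤ (x * (1-x)^d * 2 ^ Fintype.card ι) * (Good M).card := e3
            _ = (x * 2 ^ Fintype.card ι) * ((1-x)^d * (Good M).card) := by ring
            _ ≤ (x * 2 ^ Fintype.card ι) * ((1-x)^(N.card) * (Good M).card) :=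
                mul_le_mul_of_nonneg_left e4 (mul_nonneg hx0.le (by positivity))
            _ ≤ (x * 2 ^ Fintype.card ι) * (Good (N ∪ M)).card :=
                mul_le_mul_of_nonneg_left e5 (mul_nonneg hx0.le (by positivity))
            _ = x * (Good (N ∪ M)).card * 2 ^ Fintype.card ι := by ring
        exact le_of_mul_le_mul_right chain hP
  -- positivity
  have pos : ∀ n : ℕ, ∀ S ⊆ F, S.card ≤ n →
      (1 - x) ^ S.card * (2:ℝ) ^ Fintype.card ι ≤ (Good S).card := by
    intro n
    induction n with
    | zero =>
      intro S hSF hcard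
      have hS0 : S = ∅ := Finset.card_eq_zero.mp (Nat.le_zero.mp hcard)
      subst hS0
      simp only [Finset.card_empty, pow_zero, one_mul]
      have : Good ∅ = univ := by
        ext σ; simp [hGoodmem]
      rw [this, card_univ, Fintype.card_fun, Fintype.card_bool]
      simp
    | succ n IHn =>
      intro S hSF hcard
      rcases Finset.eq_empty_or_nonempty S with rfl | ⟨C, hC⟩
      · simp only [Finset.card_empty, pow_zero, one_mul]
        have : Good ∅ = univ := by ext σ; simp [hGoodmem]
        rw [this, card_univ, Fintype.card_fun, Fintype.card_bool]
        simp
      · have hCF : C ∈ F := hSF hC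
        have hins : S = insert C (S.erase C) := (Finset.insert_erase hC).symm
        have hcarde : (S.erase C).card = S.card - 1 := Finset.card_erase_of_mem hC
        have h1 : 1 ≤ S.card := Finset.card_pos.mpr ⟨C, hC⟩
        have hIHe : (1 - x) ^ (S.erase C).card * (2:ℝ) ^ Fintype.card ι
            ≤ (Good (S.erase C)).card := by
          refine IHn _ ((Finset.erase_subset _ _).trans hSF) ?_
          omega
        have hmain := main n (S.erase C) ((Finset.erase_subset _ _).trans hSF)
          (by omega) C hCF
        have hcards : ((Good S).card : ℝ)
            = (Good (S.erase C)).card - ((Good (S.erase C) ∩ Bad C).card : ℝ) := by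
          conv_lhs => rw [hins]
          exact hGoodcard C (S.erase C)
        have hScard : S.card = (S.erase C).card + 1 := by omega
        rw [hScard, hcards, pow_succ]
        nlinarith [hIHe, hmain, (Nat.cast_nonneg (Good (S.erase C)).card : (0:ℝ) ≤ _),
          pow_nonneg (by linarith : (0:ℝ) ≤ 1 - x) (S.erase C).card,
          pow_pos (by norm_num : (0:ℝ) < 2) (Fintype.card ι)]
  have hpos : (0:ℝ) < (Good F).card := by
    have := pos F.card F (Finset.Subset.refl _) le_rfl
    have h2 : (0:ℝ) < (1 - x) ^ F.card * 2 ^ Fintype.card ι :=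
      mul_pos (pow_pos (by linarith : (0:ℝ) < 1 - x) F.card)
        (pow_pos (by norm_num : (0:ℝ) < 2) (Fintype.card ι))
    linarith
  have : (Good F).Nonempty := Finset.card_pos.mp (by exact_mod_cast hpos)
  obtain ⟨σ, hσ⟩ := this
  exact ⟨σ, (hGoodmem F σ).mp hσ⟩

/-- **k-CNF consequence of the Lovász Local Lemma.**
A clause is a finite set of literals `(v, b)` (variable `v` with sign `b`),
over exactly `k` distinct variables.  An assignment `σ : V → Bool` satisfies a
clause if some literal `(v, b)` in it has `σ v = b`.  If every clause of the
formula `F` shares a variable with at most `2^k / e - 1` other clauses of `F`,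
then `F` has a satisfying assignment. -/
theorem kCNF_LLL_satisfiable {V : Type*} [DecidableEq V] (k : ℕ) (hk : 1 ≤ k)
    (F : Finset (Finset (V × Bool)))
    (hvars : ∀ C ∈ F, (C.image Prod.fst).card = k ∧ C.card = k)
    (hdeg : ∀ C ∈ F,
      ((F.filter (fun C' => C' ≠ C ∧
          ((C.image Prod.fst) ∩ (C'.image Prod.fst)).Nonempty)).card : ℝ)
        ≤ 2 ^ k / Real.exp 1 - 1) :
    ∃ σ : V → Bool, ∀ C ∈ F, ∃ l ∈ C, σ l.1 = l.2 := by
  classical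
  rcases Finset.eq_empty_or_nonempty F with rfl | hFne
  · exact ⟨fun _ => false, by simp⟩
  have he2 : Real.exp 1 < 2 ^ k := by
    rcases Nat.lt_or_ge k 2 with hk2 | hk2
    · -- k = 1 : contradiction with hdeg
      exfalso
      obtain ⟨C, hC⟩ := hFne
      have h1 := hdeg C hC
      have h0 : (0:ℝ) ≤ ((F.filter (fun C' => C' ≠ C ∧
          ((C.image Prod.fst) ∩ (C'.image Prod.fst)).Nonempty)).card : ℝ) := Nat.cast_nonneg _
      have hke : k = 1 := by omega
      subst hke
      have he : (2:ℝ) < Real.exp 1 := by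
        have := Real.exp_one_gt_d9; norm_num at this; linarith
      have : (2:ℝ)^1 / Real.exp 1 < 1 := by
        rw [div_lt_one (Real.exp_pos 1)]; norm_num; linarith
      linarith
    · have h4 : (4:ℝ) ≤ 2^k := by
        calc (4:ℝ) = 2^2 := by norm_num
        _ ≤ 2^k := pow_le_pow_right₀ (by norm_num) hk2
      have := Real.exp_one_lt_d9
      norm_num at this
      linarith
  set Vs : Finset V := F.sup (fun C => C.image Prod.fst) with hVs
  set x : ℝ := Real.exp 1 / 2^k with hx
  have h2kpos : (0:ℝ) < 2^k := by positivity
  have hx0 : 0 < x := div_pos (Real.exp_pos 1) h2kpos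
  have hx1 : x < 1 := (div_lt_one h2kpos).mpr he2
  set ι := {v : V // v ∈ Vs}
  set ext : (ι → Bool) → V → Bool :=
    fun σ v => if h : v ∈ Vs then σ ⟨v, h⟩ else false with hext
  set Bad : Finset (V × Bool) → Finset (ι → Bool) :=
    fun C => univ.filter (fun σ => ∀ l ∈ C, ext σ l.1 ≠ l.2) with hBad
  set varsι : Finset (V × Bool) → Finset ι :=
    fun C => univ.filter (fun v => v.1 ∈ C.image Prod.fst) with hvarsι
  have hsubVs : ∀ C ∈ F, C.image Prod.fst ⊆ Vs := fun C hC => Finset.le_sup hC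
  have hmemBad : ∀ C (σ : ι → Bool), σ ∈ Bad C ↔ ∀ l ∈ C, ext σ l.1 ≠ l.2 := by
    intro C σ; simp [hBad]
  have hmemvars : ∀ C (v : ι), v ∈ varsι C ↔ (v : V) ∈ C.image Prod.fst := by
    intro C v; simp [hvarsι]
  have hextval : ∀ (σ : ι → Bool) (v : ι), ext σ (v : V) = σ v := by
    intro σ v
    simp only [hext, v.2, dif_pos]
    rfl
  -- vars card
  have hvarscard : ∀ C ∈ F, (varsι C).card = k := by
    intro C hC
    have : (varsι C).card = (C.image Prod.fst).card := by
      refine Finset.card_bij' (fun v _ => (v : V))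
        (fun a ha => (⟨a, hsubVs C hC ha⟩ : ι)) ?_ ?_ ?_ ?_
      · intro v hv; exact (hmemvars C v).mp hv
      · intro a ha; exact (hmemvars C _).mpr ha
      · intro v hv; rfl
      · intro a ha; rfl
    rw [this, (hvars C hC).1]
  -- dependence
  have hdep : ∀ C ∈ F, ∀ σ τ : ι → Bool,
      (∀ v ∈ varsι C, σ v = τ v) → σ ∈ Bad C → τ ∈ Bad C := by
    intro C hC σ τ hagree hσ
    rw [hmemBad] at hσ ⊢
    intro l hl
    have hm : l.1 ∈ Vs := hsubVs C hC (Finset.mem_image.mpr ⟨l, hl, rfl⟩)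
    have hv : (⟨l.1, hm⟩ : ι) ∈ varsι C :=
      (hmemvars C _).mpr (Finset.mem_image.mpr ⟨l, hl, rfl⟩)
    have : ext τ l.1 = τ ⟨l.1, hm⟩ := by simp only [hext, hm, dif_pos]
    rw [this, ← hagree _ hv]
    have : ext σ l.1 = σ ⟨l.1, hm⟩ := by simp only [hext, hm, dif_pos]
    rw [← this]
    exact hσ l hl
  -- Bad card
  have hbadcard : ∀ C ∈ F, (Bad C).card = 2 ^ (Fintype.card ι - k) := by
    intro C hC
    have hinj : Set.InjOn Prod.fst (C : Set (V × Bool)) :=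
      Finset.card_image_iff.mp (by rw [(hvars C hC).1, (hvars C hC).2])
    set f : ι → Bool := fun v => if ((v : V), true) ∈ C then false else true with hf
    have hBadeq : Bad C = univ.filter (fun σ : ι → Bool => ∀ v ∈ varsι C, σ v = f v) := by
      ext σ
      rw [hmemBad, Finset.mem_filter]
      simp only [Finset.mem_univ, true_and]
      constructor
      · intro hbad v hv
        obtain ⟨l, hl, hfst⟩ := Finset.mem_image.mp ((hmemvars C v).mp hv)
        by_cases ht : ((v : V), true) ∈ C
        · have h1 : ext σ (v : V) ≠ true := hbad ((v : V), true) ht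
          rw [hextval] at h1
          simp only [hf, ht, if_true]
          exact Bool.eq_false_iff.mpr h1
        · have hl2 : l.2 = false := by
            by_contra h
            have : l.2 = true := by simpa using h
            apply ht
            have : l = ((v : V), true) := by
              rw [Prod.ext_iff]; exact ⟨hfst, this⟩
            rwa [this] at hl
          have h1 : ext σ l.1 ≠ l.2 := hbad l hl
          rw [hfst, hextval, hl2] at h1
          simp only [hf, ht, if_false]
          simpa using h1
      · intro hforced l hl
        have hm : l.1 ∈ Vs := hsubVs C hC (Finset.mem_image.mpr ⟨l, hl, rfl⟩)
        have hv : (⟨l.1, hm⟩ : ι) ∈ varsι C :=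
          (hmemvars C _).mpr (Finset.mem_image.mpr ⟨l, hl, rfl⟩)
        have hval := hforced _ hv
        have hev : ext σ l.1 = σ ⟨l.1, hm⟩ := hextval σ ⟨l.1, hm⟩
        rw [hev, hval]
        cases hb : l.2 with
        | true =>
          have hmem : (l.1, true) ∈ C := by
            have : l = (l.1, true) := by rw [Prod.ext_iff]; exact ⟨rfl, hb⟩
            rwa [← this]
          simp [hf, hmem]
        | false =>
          have hnmem : (l.1, true) ∉ C := by
            intro hmem
            have heq : ((l.1, true) : V × Bool) = l :=
              hinj (Finset.mem_coe.mpr hmem) (Finset.mem_coe.mpr hl) rfl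
            have : (true : Bool) = l.2 := congrArg Prod.snd heq
            rw [hb] at this
            exact Bool.noConfusion this
          simp [hf, hnmem]
    rw [hBadeq, count_forced, hvarscard C hC]
  -- neighbor filters agree
  have hfiltereq : ∀ C ∈ F,
      F.filter (fun C' => C' ≠ C ∧ ¬ Disjoint (varsι C) (varsι C'))
        = F.filter (fun C' => C' ≠ C ∧
            ((C.image Prod.fst) ∩ (C'.image Prod.fst)).Nonempty) := by
    intro C hC
    refine Finset.filter_congr ?_
    intro C' hC'
    constructor
    · rintro ⟨hne, hnd⟩
      refine ⟨hne, ?_⟩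
      obtain ⟨v, hv1, hv2⟩ := Finset.not_disjoint_iff.mp hnd
      exact ⟨(v : V), Finset.mem_inter.mpr ⟨(hmemvars C v).mp hv1, (hmemvars C' v).mp hv2⟩⟩
    · rintro ⟨hne, ⟨a, ha⟩⟩
      refine ⟨hne, ?_⟩
      rw [Finset.mem_inter] at ha
      have hm : a ∈ Vs := hsubVs C hC ha.1
      exact Finset.not_disjoint_iff.mpr ⟨⟨a, hm⟩, (hmemvars C _).mpr ha.1,
        (hmemvars C' _).mpr ha.2⟩
  -- k ≤ card ι
  have hkle : k ≤ Fintype.card ι := by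
    obtain ⟨C, hC⟩ := hFne
    have h1 : (C.image Prod.fst).card ≤ Vs.card := Finset.card_le_card (hsubVs C hC)
    rw [(hvars C hC).1] at h1
    have hcι : Fintype.card ι = Vs.card := Fintype.card_coe Vs
    omega
  -- key inequality
  have hkey : ∀ C ∈ F, ((Bad C).card : ℝ) ≤
      x * (1 - x) ^ ((F.filter (fun C' => C' ≠ C ∧
        ¬ Disjoint (varsι C) (varsι C'))).card) * 2 ^ Fintype.card ι := by
    intro C hC
    rw [hbadcard C hC, hfiltereq C hC]
    set d := (F.filter (fun C' => C' ≠ C ∧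
        ((C.image Prod.fst) ∩ (C'.image Prod.fst)).Nonempty)).card with hd
    have hdx : (d : ℝ) * x ≤ 1 - x := by
      have h1 : (d:ℝ) ≤ 2^k / Real.exp 1 - 1 := hdeg C hC
      have h2 : (d:ℝ) * x ≤ (2^k / Real.exp 1 - 1) * x :=
        mul_le_mul_of_nonneg_right h1 hx0.le
      have h3 : (2^k / Real.exp 1 - 1) * x = 1 - x := by
        rw [hx]
        field_simp
      linarith
    have hexp := pow_ge_exp_neg_one hx0 hx1 d hdx
    have hxe : x * Real.exp (-1) = 1 / 2^k := by
      rw [hx, Real.exp_neg, div_mul_eq_mul_div, mul_inv_cancel₀ (Real.exp_ne_zero 1)]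
    have hcast : ((2:ℝ) ^ (Fintype.card ι - k)) = 2 ^ Fintype.card ι / 2 ^ k := by
      rw [eq_div_iff (by positivity), ← pow_add]
      congr 1
      omega
    have hstep : (1:ℝ) / 2^k ≤ x * (1-x)^d := by
      calc (1:ℝ)/2^k = x * Real.exp (-1) := hxe.symm
        _ ≤ x * (1-x)^d := mul_le_mul_of_nonneg_left hexp hx0.le
    have h2n : (0:ℝ) < 2 ^ Fintype.card ι := by positivity
    calc ((2 ^ (Fintype.card ι - k) : ℕ) : ℝ) = 2 ^ Fintype.card ι / 2^k := by
          push_cast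
          exact hcast
      _ = (1/2^k) * 2 ^ Fintype.card ι := by ring
      _ ≤ (x * (1-x)^d) * 2 ^ Fintype.card ι := mul_le_mul_of_nonneg_right hstep h2n.le
      _ = x * (1-x)^d * 2 ^ Fintype.card ι := by ring
  obtain ⟨σ, hσ⟩ := abstract_LLL F Bad varsι x hx0 hx1 hdep hkey
  refine ⟨ext σ, ?_⟩
  intro C hC
  have := hσ C hC
  rw [hmemBad] at this
  push_neg at this
  exact this
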